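/- Let W = [[a,b],[c,d]] ∈ SL(2,ℂ) satisfy c = a + d − 2 and c ≠ 0, let ζ ∈ ℂ with |ζ| = 1, and set z₀ = (ζ − d)/c. Then c·z₀ + d = ζ and (a·z₀ + b)/(c·z₀ + d) − z₀ = 1 + (2 − ζ − conj(ζ))/c. -/

import Mathlib

/-- Displacement formula on the isometric circle: for z₀ = (ζ − d)/c with |ζ| = 1,
h(z₀) − z₀ = 1 + (2 − ζ − conj ζ)/c. -/
theorem isometric_circle_displacement (a b c d : ℂ) (h : a * d - b * c = 1)
    (h2 : c = a + d - 2) (hc : c ≠ 0) (ζ : ℂ) (hζ : ‖ζ‖ = 1)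
    (z₀ : ℂ) (hz₀ : z₀ = (ζ - d) / c) :
    c * z₀ + d = ζ ∧
      (a * z₀ + b) / (c * z₀ + d) - z₀ = 1 + (2 - ζ - (starRingEnd ℂ) ζ) / c := by
  have hζ0 : ζ ≠ 0 := by
    intro h0; rw [h0] at hζ; simp at hζ
  have hconj : (starRingEnd ℂ) ζ = 1 / ζ := by
    have h1 : ζ * (starRingEnd ℂ) ζ = 1 := by
      rw [Complex.mul_conj]
      norm_cast
      rw [← Complex.sq_norm, hζ]; norm_num
    field_simp
    linear_combination h1
  have h1 : c * z₀ + d = ζ := by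
    rw [hz₀]; field_simp; ring
  refine ⟨h1, ?_⟩
  rw [h1, hconj, hz₀]
  field_simp
  linear_combination (-1) * h + (-ζ) * h2
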